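/- Let G be a finite group and H = {h_1, …, h_d} a minimal generating set of G with d ≥ 3, and set h_0 = h_{−1} = e (the identity of G). If k and l are indices with 0 ≤ k, l ≤ d and |k − l| ≥ 3, then for all indices i, j with −1 ≤ i, j ≤ d − 1 one has h_k · h_{i+1}^{−1} · h_i ≠ h_l · h_{j+1}^{−1} · h_j. -/

import Mathlib

private lemma key_lemma {G : Type*} [Group G] (d : ℤ) (h : ℤ → G)
    (hinj : Set.InjOn h (Set.Icc 1 d))
    (hgen : Subgroup.closure (h '' Set.Icc 1 d) = ⊤)
    (hmin : ∀ s : Set G, s ⊂ h '' Set.Icc 1 d → Subgroup.closure s ≠ ⊤)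
    (t : ℤ) (ht : t ∈ Set.Icc 1 d)
    (hmem : h t ∈ Subgroup.closure (h '' (Set.Icc 1 d \ {t}))) : False := by
  apply hmin (h '' (Set.Icc 1 d \ {t}))
  · constructor
    · exact Set.image_mono Set.diff_subset
    · intro hsub
      obtain ⟨m, ⟨hm, hmt⟩, hme⟩ := hsub ⟨t, ht, rfl⟩
      exact hmt (hinj hm ht hme)
  · rw [eq_top_iff, ← hgen, Subgroup.closure_le]
    rintro x ⟨m, hm, rfl⟩
    by_cases hmt : m = t
    · subst hmt; exact hmem
    · exact Subgroup.subset_closure ⟨m, ⟨hm, hmt⟩, rfl⟩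

private lemma mem_cl {G : Type*} [Group G] (d : ℤ) (h : ℤ → G)
    (h0 : h 0 = 1) (hneg1 : h (-1) = 1)
    (t m : ℤ) (hm : m ∈ Set.Icc (-1) d) (hmt : m ≠ t) :
    h m ∈ Subgroup.closure (h '' (Set.Icc 1 d \ {t})) := by
  rcases eq_or_ne m 0 with rfl | h0m
  · rw [h0]; exact one_mem _
  rcases eq_or_ne m (-1) with rfl | h1m
  · rw [hneg1]; exact one_mem _
  · obtain ⟨hm1, hm2⟩ := hm
    exact Subgroup.subset_closure ⟨m, ⟨⟨by omega, hm2⟩, hmt⟩, rfl⟩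

private lemma aux_lemma {G : Type*} [Group G] (d : ℤ) (hd : 3 ≤ d) (h : ℤ → G)
    (h0 : h 0 = 1) (hneg1 : h (-1) = 1)
    (hinj : Set.InjOn h (Set.Icc 1 d))
    (hgen : Subgroup.closure (h '' Set.Icc 1 d) = ⊤)
    (hmin : ∀ s : Set G, s ⊂ h '' Set.Icc 1 d → Subgroup.closure s ≠ ⊤)
    (k l i j : ℤ) (hk : k ∈ Set.Icc 0 d) (hl : l ∈ Set.Icc 0 d)
    (hlk : l + 3 ≤ k)
    (hi : i ∈ Set.Icc (-1) (d - 1)) (hj : j ∈ Set.Icc (-1) (d - 1))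
    (E : h k * (h (i + 1))⁻¹ * h i = h l * (h (j + 1))⁻¹ * h j) : False := by
  obtain ⟨hk0, hkd⟩ := hk
  obtain ⟨hl0, hld⟩ := hl
  obtain ⟨hi1, hid⟩ := hi
  obtain ⟨hj1, hjd⟩ := hj
  have K : ∀ t : ℤ, t ∈ Set.Icc 1 d →
      h t ∈ Subgroup.closure (h '' (Set.Icc 1 d \ {t})) → False :=
    fun t ht hmem => key_lemma d h hinj hgen hmin t ht hmem
  have M : ∀ t m : ℤ, m ∈ Set.Icc (-1) d → m ≠ t →
      h m ∈ Subgroup.closure (h '' (Set.Icc 1 d \ {t})) :=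
    fun t m hm hmt => mem_cl d h h0 hneg1 t m hm hmt
  rcases eq_or_ne i (k - 1) with rfl | hik1
  · -- i = k - 1
    rw [show k - 1 + 1 = k from by ring] at E
    rcases eq_or_ne j (k - 1) with rfl | hjk1
    · -- j = k - 1 : h k = h l
      rw [show k - 1 + 1 = k from by ring] at E
      have hkl : h k = h l := mul_right_cancel (mul_right_cancel E)
      exact K k ⟨by omega, by omega⟩
        (by rw [hkl]; exact M _ _ ⟨by omega, by omega⟩ (by omega))
    rcases eq_or_ne j (k - 2) with rfl | hjk2
    · -- j = k - 2
      rw [show k - 2 + 1 = k - 1 from by ring] at E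
      have w : h (k - 2) = h (k - 1) * (h l)⁻¹ * (h k * (h k)⁻¹ * h (k - 1)) := by
        rw [E]; group
      refine K (k - 2) ⟨by omega, by omega⟩ ?_
      rw [w]
      exact mul_mem (mul_mem (M _ _ ⟨by omega, by omega⟩ (by omega))
        (inv_mem (M _ _ ⟨by omega, by omega⟩ (by omega))))
        (mul_mem (mul_mem (M _ _ ⟨by omega, by omega⟩ (by omega))
          (inv_mem (M _ _ ⟨by omega, by omega⟩ (by omega))))
          (M _ _ ⟨by omega, by omega⟩ (by omega)))
    · -- j ∉ {k-1, k-2}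
      have w : h (k - 1) = h l * (h (j + 1))⁻¹ * h j := by rw [← E]; group
      refine K (k - 1) ⟨by omega, by omega⟩ ?_
      rw [w]
      exact mul_mem (mul_mem (M _ _ ⟨by omega, by omega⟩ (by omega))
        (inv_mem (M _ _ ⟨by omega, by omega⟩ (by omega))))
        (M _ _ ⟨by omega, by omega⟩ (by omega))
  rcases eq_or_ne i k with hik | hik
  · -- i = k
    rw [hik] at E
    rcases eq_or_ne j k with hjk | hjk
    · -- j = k : h k = h l
      rw [hjk] at E
      have hkl : h k = h l := mul_right_cancel (mul_right_cancel E)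
      exact K k ⟨by omega, by omega⟩
        (by rw [hkl]; exact M _ _ ⟨by omega, by omega⟩ (by omega))
    rcases eq_or_ne j (k + 1) with rfl | hjk1
    · -- j = k + 1
      rw [show k + 1 + 1 = k + 2 from by ring] at E
      have w : h (k + 2) = h (k + 1) * (h k * (h (k + 1))⁻¹ * h k)⁻¹ * h l := by
        rw [E]; group
      refine K (k + 2) ⟨by omega, by omega⟩ ?_
      rw [w]
      exact mul_mem (mul_mem (M _ _ ⟨by omega, by omega⟩ (by omega))
        (inv_mem (mul_mem (mul_mem (M _ _ ⟨by omega, by omega⟩ (by omega))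
          (inv_mem (M _ _ ⟨by omega, by omega⟩ (by omega))))
          (M _ _ ⟨by omega, by omega⟩ (by omega)))))
        (M _ _ ⟨by omega, by omega⟩ (by omega))
    · -- j ∉ {k, k+1}
      have w : h (k + 1) = h k * (h l * (h (j + 1))⁻¹ * h j)⁻¹ * h k := by
        rw [← E]; group
      refine K (k + 1) ⟨by omega, by omega⟩ ?_
      rw [w]
      exact mul_mem (mul_mem (M _ _ ⟨by omega, by omega⟩ (by omega))
        (inv_mem (mul_mem (mul_mem (M _ _ ⟨by omega, by omega⟩ (by omega))
          (inv_mem (M _ _ ⟨by omega, by omega⟩ (by omega))))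
          (M _ _ ⟨by omega, by omega⟩ (by omega)))))
        (M _ _ ⟨by omega, by omega⟩ (by omega))
  -- i ∉ {k-1, k}
  rcases eq_or_ne j (k - 1) with rfl | hjk1
  · -- j = k - 1
    rw [show k - 1 + 1 = k from by ring] at E
    rcases eq_or_ne i (k - 2) with rfl | hik2
    · -- i = k - 2
      rw [show k - 2 + 1 = k - 1 from by ring] at E
      have w : h (k - 2) = h (k - 1) * (h k)⁻¹ * (h l * (h k)⁻¹ * h (k - 1)) := by
        rw [← E]; group
      refine K (k - 2) ⟨by omega, by omega⟩ ?_
      rw [w]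
      exact mul_mem (mul_mem (M _ _ ⟨by omega, by omega⟩ (by omega))
        (inv_mem (M _ _ ⟨by omega, by omega⟩ (by omega))))
        (mul_mem (mul_mem (M _ _ ⟨by omega, by omega⟩ (by omega))
          (inv_mem (M _ _ ⟨by omega, by omega⟩ (by omega))))
          (M _ _ ⟨by omega, by omega⟩ (by omega)))
    · -- i ≠ k - 2
      have w : h (k - 1) = h k * (h l)⁻¹ * (h k * (h (i + 1))⁻¹ * h i) := by
        rw [E]; group
      refine K (k - 1) ⟨by omega, by omega⟩ ?_
      rw [w]
      exact mul_mem (mul_mem (M _ _ ⟨by omega, by omega⟩ (by omega))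
        (inv_mem (M _ _ ⟨by omega, by omega⟩ (by omega))))
        (mul_mem (mul_mem (M _ _ ⟨by omega, by omega⟩ (by omega))
          (inv_mem (M _ _ ⟨by omega, by omega⟩ (by omega))))
          (M _ _ ⟨by omega, by omega⟩ (by omega)))
  rcases eq_or_ne j k with hjk | hjk
  · -- j = k
    rw [hjk] at E
    rcases eq_or_ne i (k + 1) with rfl | hik1'
    · -- i = k + 1
      rw [show k + 1 + 1 = k + 2 from by ring] at E
      have w : h (k + 2) = h (k + 1) * (h l * (h (k + 1))⁻¹ * h k)⁻¹ * h k := by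
        rw [← E]; group
      refine K (k + 2) ⟨by omega, by omega⟩ ?_
      rw [w]
      exact mul_mem (mul_mem (M _ _ ⟨by omega, by omega⟩ (by omega))
        (inv_mem (mul_mem (mul_mem (M _ _ ⟨by omega, by omega⟩ (by omega))
          (inv_mem (M _ _ ⟨by omega, by omega⟩ (by omega))))
          (M _ _ ⟨by omega, by omega⟩ (by omega)))))
        (M _ _ ⟨by omega, by omega⟩ (by omega))
    · -- i ≠ k + 1
      have w : h (k + 1) = h k * (h k * (h (i + 1))⁻¹ * h i)⁻¹ * h l := by
        rw [E]; group
      refine K (k + 1) ⟨by omega, by omega⟩ ?_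
      rw [w]
      exact mul_mem (mul_mem (M _ _ ⟨by omega, by omega⟩ (by omega))
        (inv_mem (mul_mem (mul_mem (M _ _ ⟨by omega, by omega⟩ (by omega))
          (inv_mem (M _ _ ⟨by omega, by omega⟩ (by omega))))
          (M _ _ ⟨by omega, by omega⟩ (by omega)))))
        (M _ _ ⟨by omega, by omega⟩ (by omega))
  · -- j ∉ {k-1, k}
    have w : h k = h l * (h (j + 1))⁻¹ * h j * (h i)⁻¹ * h (i + 1) := by
      rw [← E]; group
    refine K k ⟨by omega, by omega⟩ ?_
    rw [w]
    exact mul_mem (mul_mem (mul_mem (mul_mem (M _ _ ⟨by omega, by omega⟩ (by omega))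
      (inv_mem (M _ _ ⟨by omega, by omega⟩ (by omega))))
      (M _ _ ⟨by omega, by omega⟩ (by omega)))
      (inv_mem (M _ _ ⟨by omega, by omega⟩ (by omega))))
      (M _ _ ⟨by omega, by omega⟩ (by omega))

/-- Let `G` be a finite group and `h 1, …, h d` a minimal generating set of `G` (no
proper subset generates) with `d ≥ 3`, with the convention `h 0 = h (-1) = 1`. If
`0 ≤ k, l ≤ d` with `|k - l| ≥ 3`, then for all `-1 ≤ i, j ≤ d - 1` one has
`h k * (h (i+1))⁻¹ * h i ≠ h l * (h (j+1))⁻¹ * h j`. -/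
theorem minimal_generating_set_products_ne (G : Type*) [Group G] [Fintype G]
    (d : ℤ) (hd : 3 ≤ d) (h : ℤ → G) (h0 : h 0 = 1) (hneg1 : h (-1) = 1)
    (hinj : Set.InjOn h (Set.Icc 1 d))
    (hgen : Subgroup.closure (h '' Set.Icc 1 d) = ⊤)
    (hmin : ∀ s : Set G, s ⊂ h '' Set.Icc 1 d → Subgroup.closure s ≠ ⊤)
    (k l i j : ℤ) (hk : k ∈ Set.Icc 0 d) (hl : l ∈ Set.Icc 0 d) (hkl : 3 ≤ |k - l|)
    (hi : i ∈ Set.Icc (-1) (d - 1)) (hj : j ∈ Set.Icc (-1) (d - 1)) :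
    h k * (h (i + 1))⁻¹ * h i ≠ h l * (h (j + 1))⁻¹ * h j := by
  intro E
  rcases abs_cases (k - l) with ⟨_, _⟩ | ⟨_, _⟩
  · exact aux_lemma d hd h h0 hneg1 hinj hgen hmin k l i j hk hl (by omega) hi hj E
  · exact aux_lemma d hd h h0 hneg1 hinj hgen hmin l k j i hl hk (by omega) hj hi E.symm
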